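/- The polytope P = {(x,y,z) ∈ ℝ³ : 0 ≤ x ≤ 2/3, 0 ≤ y ≤ 2/3, 0 ≤ z ≤ 2/3, x+y ≥ 1/3, z ≥ x − 1/3, y+z ≤ 1} has exactly 11 vertices: (1/3,0,0), (0,1/3,0), (0,2/3,0), (1/3,2/3,0), (2/3,2/3,1/3), (2/3,0,1/3), (0,2/3,1/3), (1/3,0,2/3), (2/3,0,2/3), (2/3,1/3,2/3), (0,1/3,2/3). -/

import Mathlib

/-- The polytope parametrizing the state space of H₁₁(19):
{0 ≤ x ≤ 2/3, 0 ≤ y ≤ 2/3, 0 ≤ z ≤ 2/3, x+y ≥ 1/3, z ≥ x − 1/3, y+z ≤ 1}. -/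
def H11Poly : Set (ℝ × ℝ × ℝ) :=
  {p | 0 ≤ p.1 ∧ p.1 ≤ 2/3 ∧ 0 ≤ p.2.1 ∧ p.2.1 ≤ 2/3 ∧ 0 ≤ p.2.2 ∧ p.2.2 ≤ 2/3 ∧
       1/3 ≤ p.1 + p.2.1 ∧ p.1 - 1/3 ≤ p.2.2 ∧ p.2.1 + p.2.2 ≤ 1}

def H11V : Set (ℝ × ℝ × ℝ) :=
  {(1/3, 0, 0), (0, 1/3, 0), (0, 2/3, 0), (1/3, 2/3, 0), (2/3, 2/3, 1/3),
   (2/3, 0, 1/3), (0, 2/3, 1/3), (1/3, 0, 2/3), (2/3, 0, 2/3),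
   (2/3, 1/3, 2/3), (0, 1/3, 2/3)}

lemma comb {V : Set (ℝ×ℝ×ℝ)} {a b p : ℝ×ℝ×ℝ} (ha : a ∈ convexHull ℝ V)
    (hb : b ∈ convexHull ℝ V) {t : ℝ} (ht0 : 0 ≤ t) (ht1 : t ≤ 1)
    (hp : p = (1-t) • a + t • b) : p ∈ convexHull ℝ V :=
  hp ▸ (convex_convexHull ℝ V) ha hb (by linarith) ht0 (by ring)

lemma m1 : ((1/3, 0, 0) : ℝ×ℝ×ℝ) ∈ convexHull ℝ H11V :=
  subset_convexHull ℝ _ (by simp only [H11V, Set.mem_insert_iff, Set.mem_singleton_iff, Prod.mk.injEq]; norm_num)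
lemma m2 : ((0, 1/3, 0) : ℝ×ℝ×ℝ) ∈ convexHull ℝ H11V :=
  subset_convexHull ℝ _ (by simp only [H11V, Set.mem_insert_iff, Set.mem_singleton_iff, Prod.mk.injEq]; norm_num)
lemma m3 : ((0, 2/3, 0) : ℝ×ℝ×ℝ) ∈ convexHull ℝ H11V :=
  subset_convexHull ℝ _ (by simp only [H11V, Set.mem_insert_iff, Set.mem_singleton_iff, Prod.mk.injEq]; norm_num)
lemma m4 : ((1/3, 2/3, 0) : ℝ×ℝ×ℝ) ∈ convexHull ℝ H11V :=
  subset_convexHull ℝ _ (by simp only [H11V, Set.mem_insert_iff, Set.mem_singleton_iff, Prod.mk.injEq]; norm_num)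
lemma m5 : ((2/3, 2/3, 1/3) : ℝ×ℝ×ℝ) ∈ convexHull ℝ H11V :=
  subset_convexHull ℝ _ (by simp only [H11V, Set.mem_insert_iff, Set.mem_singleton_iff, Prod.mk.injEq]; norm_num)
lemma m6 : ((2/3, 0, 1/3) : ℝ×ℝ×ℝ) ∈ convexHull ℝ H11V :=
  subset_convexHull ℝ _ (by simp only [H11V, Set.mem_insert_iff, Set.mem_singleton_iff, Prod.mk.injEq]; norm_num)
lemma m7 : ((0, 2/3, 1/3) : ℝ×ℝ×ℝ) ∈ convexHull ℝ H11V :=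
  subset_convexHull ℝ _ (by simp only [H11V, Set.mem_insert_iff, Set.mem_singleton_iff, Prod.mk.injEq]; norm_num)
lemma m8 : ((1/3, 0, 2/3) : ℝ×ℝ×ℝ) ∈ convexHull ℝ H11V :=
  subset_convexHull ℝ _ (by simp only [H11V, Set.mem_insert_iff, Set.mem_singleton_iff, Prod.mk.injEq]; norm_num)
lemma m9 : ((2/3, 0, 2/3) : ℝ×ℝ×ℝ) ∈ convexHull ℝ H11V :=
  subset_convexHull ℝ _ (by simp only [H11V, Set.mem_insert_iff, Set.mem_singleton_iff, Prod.mk.injEq]; norm_num)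
lemma m10 : ((2/3, 1/3, 2/3) : ℝ×ℝ×ℝ) ∈ convexHull ℝ H11V :=
  subset_convexHull ℝ _ (by simp only [H11V, Set.mem_insert_iff, Set.mem_singleton_iff, Prod.mk.injEq]; norm_num)
lemma m11 : ((0, 1/3, 2/3) : ℝ×ℝ×ℝ) ∈ convexHull ℝ H11V :=
  subset_convexHull ℝ _ (by simp only [H11V, Set.mem_insert_iff, Set.mem_singleton_iff, Prod.mk.injEq]; norm_num)

lemma face0 {x y : ℝ} (h0 : 0 ≤ x) (h1 : x ≤ 1/3) (h2 : 1/3 - x ≤ y) (h3 : y ≤ 2/3) :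
    ((x, y, 0) : ℝ×ℝ×ℝ) ∈ convexHull ℝ H11V := by
  have hd : (0:ℝ) < 1/3 + x := by linarith
  have hA : ((x, 1/3 - x, 0) : ℝ×ℝ×ℝ) ∈ convexHull ℝ H11V :=
    comb m1 m2 (t := 1 - 3*x) (by linarith) (by linarith)
      (by simp only [Prod.smul_mk, Prod.mk_add_mk, smul_eq_mul, Prod.mk.injEq]
          refine ⟨by ring, by ring, by ring⟩)
  have hB : ((x, 2/3, 0) : ℝ×ℝ×ℝ) ∈ convexHull ℝ H11V :=
    comb m4 m3 (t := 1 - 3*x) (by linarith) (by linarith)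
      (by simp only [Prod.smul_mk, Prod.mk_add_mk, smul_eq_mul, Prod.mk.injEq]
          refine ⟨by ring, by ring, by ring⟩)
  refine comb hA hB (t := (y - (1/3 - x)) / (1/3 + x)) (div_nonneg (by linarith) hd.le)
    ((div_le_one hd).2 (by linarith)) ?_
  have hd' := hd.ne'
  simp only [Prod.smul_mk, Prod.mk_add_mk, smul_eq_mul, Prod.mk.injEq]
  refine ⟨by field_simp; ring, by field_simp; ring, by ring⟩

lemma face1 {x y : ℝ} (h0 : 1/3 ≤ x) (h1 : x ≤ 2/3) (h2 : 0 ≤ y) (h3 : y ≤ 2/3) :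
    ((x, y, x - 1/3) : ℝ×ℝ×ℝ) ∈ convexHull ℝ H11V := by
  have hA : ((x, 0, x - 1/3) : ℝ×ℝ×ℝ) ∈ convexHull ℝ H11V :=
    comb m1 m6 (t := 3*x - 1) (by linarith) (by linarith)
      (by simp only [Prod.smul_mk, Prod.mk_add_mk, smul_eq_mul, Prod.mk.injEq]
          refine ⟨by ring, by ring, by ring⟩)
  have hB : ((x, 2/3, x - 1/3) : ℝ×ℝ×ℝ) ∈ convexHull ℝ H11V :=
    comb m4 m5 (t := 3*x - 1) (by linarith) (by linarith)
      (by simp only [Prod.smul_mk, Prod.mk_add_mk, smul_eq_mul, Prod.mk.injEq]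
          refine ⟨by ring, by ring, by ring⟩)
  refine comb hA hB (t := 3*y/2) (by linarith) (by linarith) ?_
  simp only [Prod.smul_mk, Prod.mk_add_mk, smul_eq_mul, Prod.mk.injEq]
  refine ⟨by ring, by ring, by ring⟩

lemma face2 {x y : ℝ} (h0 : 0 ≤ x) (h1 : x ≤ 2/3) (h2 : 0 ≤ y) (h3 : y ≤ 1/3)
    (h4 : 1/3 ≤ x + y) : ((x, y, 2/3) : ℝ×ℝ×ℝ) ∈ convexHull ℝ H11V := by
  have hd : (0:ℝ) < 1/3 + y := by linarith
  have hA : ((1/3 - y, y, 2/3) : ℝ×ℝ×ℝ) ∈ convexHull ℝ H11V :=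
    comb m8 m11 (t := 3*y) (by linarith) (by linarith)
      (by simp only [Prod.smul_mk, Prod.mk_add_mk, smul_eq_mul, Prod.mk.injEq]
          refine ⟨by ring, by ring, by ring⟩)
  have hB : ((2/3, y, 2/3) : ℝ×ℝ×ℝ) ∈ convexHull ℝ H11V :=
    comb m9 m10 (t := 3*y) (by linarith) (by linarith)
      (by simp only [Prod.smul_mk, Prod.mk_add_mk, smul_eq_mul, Prod.mk.injEq]
          refine ⟨by ring, by ring, by ring⟩)
  refine comb hA hB (t := (x - (1/3 - y)) / (1/3 + y)) (div_nonneg (by linarith) hd.le)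
    ((div_le_one hd).2 (by linarith)) ?_
  have hd' := hd.ne'
  simp only [Prod.smul_mk, Prod.mk_add_mk, smul_eq_mul, Prod.mk.injEq]
  refine ⟨by field_simp; ring, by field_simp; ring, by ring⟩

lemma face3 {x y : ℝ} (h0 : 0 ≤ x) (h1 : x ≤ 2/3) (h2 : 1/3 ≤ y) (h3 : y ≤ 2/3) :
    ((x, y, 1 - y) : ℝ×ℝ×ℝ) ∈ convexHull ℝ H11V := by
  have hA : ((0, y, 1 - y) : ℝ×ℝ×ℝ) ∈ convexHull ℝ H11V :=
    comb m11 m7 (t := 3*y - 1) (by linarith) (by linarith)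
      (by simp only [Prod.smul_mk, Prod.mk_add_mk, smul_eq_mul, Prod.mk.injEq]
          refine ⟨by ring, by ring, by ring⟩)
  have hB : ((2/3, y, 1 - y) : ℝ×ℝ×ℝ) ∈ convexHull ℝ H11V :=
    comb m10 m5 (t := 3*y - 1) (by linarith) (by linarith)
      (by simp only [Prod.smul_mk, Prod.mk_add_mk, smul_eq_mul, Prod.mk.injEq]
          refine ⟨by ring, by ring, by ring⟩)
  refine comb hA hB (t := 3*x/2) (by linarith) (by linarith) ?_
  simp only [Prod.smul_mk, Prod.mk_add_mk, smul_eq_mul, Prod.mk.injEq]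
  refine ⟨by ring, by ring, by ring⟩

lemma hull_subset : H11Poly ⊆ convexHull ℝ H11V := by
  rintro ⟨x, y, z⟩ ⟨p1, p2, q1, q2, r1, r2, s1, s2, s3⟩
  simp only at p1 p2 q1 q2 r1 r2 s1 s2 s3
  by_cases hx : x ≤ 1/3
  · have hbot : ((x, y, 0) : ℝ×ℝ×ℝ) ∈ convexHull ℝ H11V := face0 p1 hx (by linarith) q2
    by_cases hy : y ≤ 1/3
    · have htop := face2 p1 p2 q1 hy s1
      refine comb hbot htop (t := 3*z/2) (by linarith) (by linarith) ?_
      simp only [Prod.smul_mk, Prod.mk_add_mk, smul_eq_mul, Prod.mk.injEq]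
      refine ⟨by ring, by ring, by ring⟩
    · push_neg at hy
      have htop := face3 p1 p2 hy.le q2
      have hd : (0:ℝ) < 1 - y := by linarith
      have hd' := hd.ne'
      refine comb hbot htop (t := z / (1 - y)) (div_nonneg r1 hd.le)
        ((div_le_one hd).2 (by linarith)) ?_
      simp only [Prod.smul_mk, Prod.mk_add_mk, smul_eq_mul, Prod.mk.injEq]
      refine ⟨by ring, by ring, by field_simp; ring⟩
  · push_neg at hx
    have hbot := face1 hx.le p2 q1 q2
    by_cases hy : y ≤ 1/3
    · have htop := face2 p1 p2 q1 hy (by linarith)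
      have hd : (0:ℝ) < 1 - x := by linarith
      have hd' := hd.ne'
      refine comb hbot htop (t := (z - x + 1/3) / (1 - x)) (div_nonneg (by linarith) hd.le)
        ((div_le_one hd).2 (by linarith)) ?_
      simp only [Prod.smul_mk, Prod.mk_add_mk, smul_eq_mul, Prod.mk.injEq]
      refine ⟨by ring, by ring, by field_simp; ring⟩
    · push_neg at hy
      have htop := face3 p1 p2 hy.le q2
      by_cases hc : x + y < 4/3
      · have hd : (0:ℝ) < 4/3 - x - y := by linarith
        have hd' := hd.ne'
        refine comb hbot htop (t := (z - x + 1/3) / (4/3 - x - y)) (div_nonneg (by linarith) hd.le)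
          ((div_le_one hd).2 (by linarith)) ?_
        have ht : (z - x + 1/3) / (4/3 - x - y) * (4/3 - x - y) = z - x + 1/3 :=
          div_mul_cancel₀ _ hd'
        simp only [Prod.smul_mk, Prod.mk_add_mk, smul_eq_mul, Prod.mk.injEq]
        refine ⟨by ring, by ring, by linear_combination -ht⟩
      · push_neg at hc
        have hx2 : x = 2/3 := by linarith
        have hy2 : y = 2/3 := by linarith
        have hz2 : z = 1/3 := by rw [hx2] at s2; rw [hy2] at s3; linarith
        rw [hx2, hy2, hz2]; exact m5

lemma cvx_le {a b u v c : ℝ} (ha : 0 ≤ a) (hb : 0 ≤ b) (hab : a + b = 1)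
    (hu : u ≤ c) (hv : v ≤ c) : a*u + b*v ≤ c := by
  have h3 : a*c + b*c = c := by rw [← add_mul, hab, one_mul]
  have h1 : a*u ≤ a*c := mul_le_mul_of_nonneg_left hu ha
  have h2 : b*v ≤ b*c := mul_le_mul_of_nonneg_left hv hb
  linarith

lemma cvx_ge {a b u v c : ℝ} (ha : 0 ≤ a) (hb : 0 ≤ b) (hab : a + b = 1)
    (hu : c ≤ u) (hv : c ≤ v) : c ≤ a*u + b*v := by
  have := cvx_le ha hb hab (u := -u) (v := -v) (c := -c) (by linarith) (by linarith)
  linarith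

lemma convex_H11Poly : Convex ℝ H11Poly := by
  rintro ⟨x1, y1, z1⟩ ⟨p1, p2, q1, q2, r1, r2, s1, s2, s3⟩
    ⟨x2, y2, z2⟩ ⟨p1', p2', q1', q2', r1', r2', s1', s2', s3'⟩ a b ha hb hab
  simp only at p1 p2 q1 q2 r1 r2 s1 s2 s3 p1' p2' q1' q2' r1' r2' s1' s2' s3'
  refine ⟨?_, ?_, ?_, ?_, ?_, ?_, ?_, ?_, ?_⟩ <;>
    simp only [Prod.smul_mk, Prod.mk_add_mk, smul_eq_mul]
  · exact cvx_ge ha hb hab p1 p1'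
  · exact cvx_le ha hb hab p2 p2'
  · exact cvx_ge ha hb hab q1 q1'
  · exact cvx_le ha hb hab q2 q2'
  · exact cvx_ge ha hb hab r1 r1'
  · exact cvx_le ha hb hab r2 r2'
  · have := cvx_ge ha hb hab s1 s1'; linarith
  · have := cvx_le ha hb hab (u := x1 - z1) (v := x2 - z2) (c := 1/3)
      (by linarith) (by linarith); linarith
  · have := cvx_le ha hb hab (u := y1 + z1) (v := y2 + z2) (c := 1) s3 s3'; linarith

lemma hull_eq : H11Poly = convexHull ℝ H11V := by
  refine le_antisymm hull_subset (convexHull_min ?_ convex_H11Poly)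
  intro v hv
  simp only [H11V, Set.mem_insert_iff, Set.mem_singleton_iff] at hv
  rcases hv with rfl|rfl|rfl|rfl|rfl|rfl|rfl|rfl|rfl|rfl|rfl <;> norm_num [H11Poly]

lemma tmin {a b u v t : ℝ} (ha : 0 < a) (hb : 0 < b) (hab : a + b = 1)
    (hu : t ≤ u) (hv : t ≤ v) (h : a*u + b*v = t) : u = t ∧ v = t := by
  have h3 : a*t + b*t = t := by rw [← add_mul, hab, one_mul]
  constructor
  · by_contra h'
    have h' : t < u := lt_of_le_of_ne hu (Ne.symm h')
    have h1 : a*t < a*u := mul_lt_mul_of_pos_left h' ha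
    have h2 : b*t ≤ b*v := mul_le_mul_of_nonneg_left hv hb.le
    linarith
  · by_contra h'
    have h' : t < v := lt_of_le_of_ne hv (Ne.symm h')
    have h1 : b*t < b*v := mul_lt_mul_of_pos_left h' hb
    have h2 : a*t ≤ a*u := mul_le_mul_of_nonneg_left hu ha.le
    linarith

lemma tmax {a b u v t : ℝ} (ha : 0 < a) (hb : 0 < b) (hab : a + b = 1)
    (hu : u ≤ t) (hv : v ≤ t) (h : a*u + b*v = t) : u = t ∧ v = t := by
  have := tmin ha hb hab (t := -t) (u := -u) (v := -v) (by linarith) (by linarith) (by linarith)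
  exact ⟨by linarith [this.1], by linarith [this.2]⟩

lemma ep1 : ((1/3, 0, 0) : ℝ×ℝ×ℝ) ∈ Set.extremePoints ℝ H11Poly := by
  refine ⟨by norm_num [H11Poly], ?_⟩
  rintro ⟨x1, y1, z1⟩ ⟨p1, p2, q1, q2, r1, r2, s1, s2, s3⟩
    ⟨x2, y2, z2⟩ ⟨p1', p2', q1', q2', r1', r2', s1', s2', s3'⟩ ⟨a, b, ha, hb, hab, heq⟩
  simp only [Prod.smul_mk, Prod.mk_add_mk, smul_eq_mul, Prod.mk.injEq] at heq
  obtain ⟨ex, ey, ez⟩ := heq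
  simp only at p1 p2 q1 q2 r1 r2 s1 s2 s3 p1' p2' q1' q2' r1' r2' s1' s2' s3'
  obtain ⟨hy1, hy2⟩ := tmin ha hb hab q1 q1' ey
  obtain ⟨hz1, hz2⟩ := tmin ha hb hab r1 r1' ez
  obtain ⟨hs1, hs2⟩ := tmin ha hb hab s1 s1' (by linarith)
  simp only [Prod.mk.injEq] <;>
    exact ⟨by linarith, by linarith, by linarith⟩

lemma ep2 : ((0, 1/3, 0) : ℝ×ℝ×ℝ) ∈ Set.extremePoints ℝ H11Poly := by
  refine ⟨by norm_num [H11Poly], ?_⟩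
  rintro ⟨x1, y1, z1⟩ ⟨p1, p2, q1, q2, r1, r2, s1, s2, s3⟩
    ⟨x2, y2, z2⟩ ⟨p1', p2', q1', q2', r1', r2', s1', s2', s3'⟩ ⟨a, b, ha, hb, hab, heq⟩
  simp only [Prod.smul_mk, Prod.mk_add_mk, smul_eq_mul, Prod.mk.injEq] at heq
  obtain ⟨ex, ey, ez⟩ := heq
  simp only at p1 p2 q1 q2 r1 r2 s1 s2 s3 p1' p2' q1' q2' r1' r2' s1' s2' s3'
  obtain ⟨hx1, hx2⟩ := tmin ha hb hab p1 p1' ex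
  obtain ⟨hz1, hz2⟩ := tmin ha hb hab r1 r1' ez
  obtain ⟨hs1, hs2⟩ := tmin ha hb hab s1 s1' (by linarith)
  simp only [Prod.mk.injEq] <;>
    exact ⟨by linarith, by linarith, by linarith⟩

lemma ep3 : ((0, 2/3, 0) : ℝ×ℝ×ℝ) ∈ Set.extremePoints ℝ H11Poly := by
  refine ⟨by norm_num [H11Poly], ?_⟩
  rintro ⟨x1, y1, z1⟩ ⟨p1, p2, q1, q2, r1, r2, s1, s2, s3⟩
    ⟨x2, y2, z2⟩ ⟨p1', p2', q1', q2', r1', r2', s1', s2', s3'⟩ ⟨a, b, ha, hb, hab, heq⟩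
  simp only [Prod.smul_mk, Prod.mk_add_mk, smul_eq_mul, Prod.mk.injEq] at heq
  obtain ⟨ex, ey, ez⟩ := heq
  simp only at p1 p2 q1 q2 r1 r2 s1 s2 s3 p1' p2' q1' q2' r1' r2' s1' s2' s3'
  obtain ⟨hx1, hx2⟩ := tmin ha hb hab p1 p1' ex
  obtain ⟨hz1, hz2⟩ := tmin ha hb hab r1 r1' ez
  obtain ⟨hy1, hy2⟩ := tmax ha hb hab q2 q2' ey
  simp only [Prod.mk.injEq] <;>
    exact ⟨by linarith, by linarith, by linarith⟩

lemma ep4 : ((1/3, 2/3, 0) : ℝ×ℝ×ℝ) ∈ Set.extremePoints ℝ H11Poly := by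
  refine ⟨by norm_num [H11Poly], ?_⟩
  rintro ⟨x1, y1, z1⟩ ⟨p1, p2, q1, q2, r1, r2, s1, s2, s3⟩
    ⟨x2, y2, z2⟩ ⟨p1', p2', q1', q2', r1', r2', s1', s2', s3'⟩ ⟨a, b, ha, hb, hab, heq⟩
  simp only [Prod.smul_mk, Prod.mk_add_mk, smul_eq_mul, Prod.mk.injEq] at heq
  obtain ⟨ex, ey, ez⟩ := heq
  simp only at p1 p2 q1 q2 r1 r2 s1 s2 s3 p1' p2' q1' q2' r1' r2' s1' s2' s3'
  obtain ⟨hz1, hz2⟩ := tmin ha hb hab r1 r1' ez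
  obtain ⟨hy1, hy2⟩ := tmax ha hb hab q2 q2' ey
  obtain ⟨ht1, ht2⟩ := tmax ha hb hab (u := x1 - z1) (v := x2 - z2) (t := 1/3)
    (by linarith) (by linarith) (by linarith)
  simp only [Prod.mk.injEq] <;>
    exact ⟨by linarith, by linarith, by linarith⟩

lemma ep5 : ((2/3, 2/3, 1/3) : ℝ×ℝ×ℝ) ∈ Set.extremePoints ℝ H11Poly := by
  refine ⟨by norm_num [H11Poly], ?_⟩
  rintro ⟨x1, y1, z1⟩ ⟨p1, p2, q1, q2, r1, r2, s1, s2, s3⟩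
    ⟨x2, y2, z2⟩ ⟨p1', p2', q1', q2', r1', r2', s1', s2', s3'⟩ ⟨a, b, ha, hb, hab, heq⟩
  simp only [Prod.smul_mk, Prod.mk_add_mk, smul_eq_mul, Prod.mk.injEq] at heq
  obtain ⟨ex, ey, ez⟩ := heq
  simp only at p1 p2 q1 q2 r1 r2 s1 s2 s3 p1' p2' q1' q2' r1' r2' s1' s2' s3'
  obtain ⟨hx1, hx2⟩ := tmax ha hb hab p2 p2' ex
  obtain ⟨hy1, hy2⟩ := tmax ha hb hab q2 q2' ey
  simp only [Prod.mk.injEq] <;>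
    exact ⟨by linarith, by linarith, by linarith⟩

lemma ep6 : ((2/3, 0, 1/3) : ℝ×ℝ×ℝ) ∈ Set.extremePoints ℝ H11Poly := by
  refine ⟨by norm_num [H11Poly], ?_⟩
  rintro ⟨x1, y1, z1⟩ ⟨p1, p2, q1, q2, r1, r2, s1, s2, s3⟩
    ⟨x2, y2, z2⟩ ⟨p1', p2', q1', q2', r1', r2', s1', s2', s3'⟩ ⟨a, b, ha, hb, hab, heq⟩
  simp only [Prod.smul_mk, Prod.mk_add_mk, smul_eq_mul, Prod.mk.injEq] at heq
  obtain ⟨ex, ey, ez⟩ := heq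
  simp only at p1 p2 q1 q2 r1 r2 s1 s2 s3 p1' p2' q1' q2' r1' r2' s1' s2' s3'
  obtain ⟨hx1, hx2⟩ := tmax ha hb hab p2 p2' ex
  obtain ⟨hy1, hy2⟩ := tmin ha hb hab q1 q1' ey
  obtain ⟨ht1, ht2⟩ := tmax ha hb hab (u := x1 - z1) (v := x2 - z2) (t := 1/3)
    (by linarith) (by linarith) (by linarith)
  simp only [Prod.mk.injEq] <;>
    exact ⟨by linarith, by linarith, by linarith⟩

lemma ep7 : ((0, 2/3, 1/3) : ℝ×ℝ×ℝ) ∈ Set.extremePoints ℝ H11Poly := by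
  refine ⟨by norm_num [H11Poly], ?_⟩
  rintro ⟨x1, y1, z1⟩ ⟨p1, p2, q1, q2, r1, r2, s1, s2, s3⟩
    ⟨x2, y2, z2⟩ ⟨p1', p2', q1', q2', r1', r2', s1', s2', s3'⟩ ⟨a, b, ha, hb, hab, heq⟩
  simp only [Prod.smul_mk, Prod.mk_add_mk, smul_eq_mul, Prod.mk.injEq] at heq
  obtain ⟨ex, ey, ez⟩ := heq
  simp only at p1 p2 q1 q2 r1 r2 s1 s2 s3 p1' p2' q1' q2' r1' r2' s1' s2' s3'
  obtain ⟨hx1, hx2⟩ := tmin ha hb hab p1 p1' ex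
  obtain ⟨hy1, hy2⟩ := tmax ha hb hab q2 q2' ey
  obtain ⟨ht1, ht2⟩ := tmax ha hb hab (u := y1 + z1) (v := y2 + z2) (t := 1)
    s3 s3' (by linarith)
  simp only [Prod.mk.injEq] <;>
    exact ⟨by linarith, by linarith, by linarith⟩

lemma ep8 : ((1/3, 0, 2/3) : ℝ×ℝ×ℝ) ∈ Set.extremePoints ℝ H11Poly := by
  refine ⟨by norm_num [H11Poly], ?_⟩
  rintro ⟨x1, y1, z1⟩ ⟨p1, p2, q1, q2, r1, r2, s1, s2, s3⟩
    ⟨x2, y2, z2⟩ ⟨p1', p2', q1', q2', r1', r2', s1', s2', s3'⟩ ⟨a, b, ha, hb, hab, heq⟩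
  simp only [Prod.smul_mk, Prod.mk_add_mk, smul_eq_mul, Prod.mk.injEq] at heq
  obtain ⟨ex, ey, ez⟩ := heq
  simp only at p1 p2 q1 q2 r1 r2 s1 s2 s3 p1' p2' q1' q2' r1' r2' s1' s2' s3'
  obtain ⟨hy1, hy2⟩ := tmin ha hb hab q1 q1' ey
  obtain ⟨hz1, hz2⟩ := tmax ha hb hab r2 r2' ez
  obtain ⟨hs1, hs2⟩ := tmin ha hb hab s1 s1' (by linarith)
  simp only [Prod.mk.injEq] <;>
    exact ⟨by linarith, by linarith, by linarith⟩

lemma ep9 : ((2/3, 0, 2/3) : ℝ×ℝ×ℝ) ∈ Set.extremePoints ℝ H11Poly := by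
  refine ⟨by norm_num [H11Poly], ?_⟩
  rintro ⟨x1, y1, z1⟩ ⟨p1, p2, q1, q2, r1, r2, s1, s2, s3⟩
    ⟨x2, y2, z2⟩ ⟨p1', p2', q1', q2', r1', r2', s1', s2', s3'⟩ ⟨a, b, ha, hb, hab, heq⟩
  simp only [Prod.smul_mk, Prod.mk_add_mk, smul_eq_mul, Prod.mk.injEq] at heq
  obtain ⟨ex, ey, ez⟩ := heq
  simp only at p1 p2 q1 q2 r1 r2 s1 s2 s3 p1' p2' q1' q2' r1' r2' s1' s2' s3'
  obtain ⟨hx1, hx2⟩ := tmax ha hb hab p2 p2' ex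
  obtain ⟨hy1, hy2⟩ := tmin ha hb hab q1 q1' ey
  obtain ⟨hz1, hz2⟩ := tmax ha hb hab r2 r2' ez
  simp only [Prod.mk.injEq] <;>
    exact ⟨by linarith, by linarith, by linarith⟩

lemma ep10 : ((2/3, 1/3, 2/3) : ℝ×ℝ×ℝ) ∈ Set.extremePoints ℝ H11Poly := by
  refine ⟨by norm_num [H11Poly], ?_⟩
  rintro ⟨x1, y1, z1⟩ ⟨p1, p2, q1, q2, r1, r2, s1, s2, s3⟩
    ⟨x2, y2, z2⟩ ⟨p1', p2', q1', q2', r1', r2', s1', s2', s3'⟩ ⟨a, b, ha, hb, hab, heq⟩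
  simp only [Prod.smul_mk, Prod.mk_add_mk, smul_eq_mul, Prod.mk.injEq] at heq
  obtain ⟨ex, ey, ez⟩ := heq
  simp only at p1 p2 q1 q2 r1 r2 s1 s2 s3 p1' p2' q1' q2' r1' r2' s1' s2' s3'
  obtain ⟨hx1, hx2⟩ := tmax ha hb hab p2 p2' ex
  obtain ⟨hz1, hz2⟩ := tmax ha hb hab r2 r2' ez
  obtain ⟨ht1, ht2⟩ := tmax ha hb hab (u := y1 + z1) (v := y2 + z2) (t := 1)
    s3 s3' (by linarith)
  simp only [Prod.mk.injEq] <;>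
    exact ⟨by linarith, by linarith, by linarith⟩

lemma ep11 : ((0, 1/3, 2/3) : ℝ×ℝ×ℝ) ∈ Set.extremePoints ℝ H11Poly := by
  refine ⟨by norm_num [H11Poly], ?_⟩
  rintro ⟨x1, y1, z1⟩ ⟨p1, p2, q1, q2, r1, r2, s1, s2, s3⟩
    ⟨x2, y2, z2⟩ ⟨p1', p2', q1', q2', r1', r2', s1', s2', s3'⟩ ⟨a, b, ha, hb, hab, heq⟩
  simp only [Prod.smul_mk, Prod.mk_add_mk, smul_eq_mul, Prod.mk.injEq] at heq
  obtain ⟨ex, ey, ez⟩ := heq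
  simp only at p1 p2 q1 q2 r1 r2 s1 s2 s3 p1' p2' q1' q2' r1' r2' s1' s2' s3'
  obtain ⟨hx1, hx2⟩ := tmin ha hb hab p1 p1' ex
  obtain ⟨hz1, hz2⟩ := tmax ha hb hab r2 r2' ez
  obtain ⟨ht1, ht2⟩ := tmax ha hb hab (u := y1 + z1) (v := y2 + z2) (t := 1)
    s3 s3' (by linarith)
  simp only [Prod.mk.injEq] <;>
    exact ⟨by linarith, by linarith, by linarith⟩


/-- The polytope H₁₁Poly has exactly 11 vertices (extreme points). -/
theorem H11Poly_extremePoints :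
    Set.extremePoints ℝ H11Poly =
      {(1/3, 0, 0), (0, 1/3, 0), (0, 2/3, 0), (1/3, 2/3, 0), (2/3, 2/3, 1/3),
       (2/3, 0, 1/3), (0, 2/3, 1/3), (1/3, 0, 2/3), (2/3, 0, 2/3),
       (2/3, 1/3, 2/3), (0, 1/3, 2/3)} := by
  apply Set.Subset.antisymm
  · intro p hp
    rw [hull_eq] at hp
    exact extremePoints_convexHull_subset hp
  · intro v hv
    simp only [Set.mem_insert_iff, Set.mem_singleton_iff] at hv
    rcases hv with rfl|rfl|rfl|rfl|rfl|rfl|rfl|rfl|rfl|rfl|rfl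
    exacts [ep1, ep2, ep3, ep4, ep5, ep6, ep7, ep8, ep9, ep10, ep11]
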